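/- Let B be a real Banach space and let f : {(x,y) ∈ ℝ² : x ≤ y} → B be a function that vanishes on the diagonal {(t,t)} and is not identically zero. Define the linear representation Φ on persistence diagrams by Φ(X) = ∑_{x ∈ X} f(x). Then for p ∈ [1,∞] and C > 0, Φ is Lipschitz with constant C with respect to W_p (i.e., ‖Φ(X) − Φ(Y)‖_B ≤ C·W_p(X,Y) for all persistence diagrams X, Y) if and only if p = 1 and f is Lipschitz with constant C with respect to the ℓ¹ metric on ℝ². -/

import Mathlib

open scoped ENNReal

noncomputable section

/-- The ℓ^p norm on ℝ², for `p ∈ [1, ∞]`. -/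
def lpNorm2 (p : ℝ≥0∞) (z : ℝ × ℝ) : ℝ :=
  if p = ∞ then max |z.1| |z.2|
  else (|z.1| ^ p.toReal + |z.2| ^ p.toReal) ^ (1 / p.toReal)

/-- The ℓ^p distance from a point of ℝ² to the diagonal `Δ = {(t,t)}`. -/
def diagDist (p : ℝ≥0∞) (z : ℝ × ℝ) : ℝ :=
  ⨅ t : ℝ, lpNorm2 p (z.1 - t, z.2 - t)

/-- A persistence diagram: a finite multiset of points `(b, d)` of ℝ² with `b < d`. -/
def IsDiagram (X : Multiset (ℝ × ℝ)) : Prop :=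
  ∀ z ∈ X, z.1 < z.2

/-- A matching between two diagrams `X` and `Y`: some points of `X` are paired bijectively
with points of `Y`, and every remaining point of `X` or `Y` is left unmatched (assigned to
the diagonal). -/
structure Matching (X Y : Multiset (ℝ × ℝ)) where
  pairs : Multiset ((ℝ × ℝ) × (ℝ × ℝ))
  unmatchedX : Multiset (ℝ × ℝ)
  unmatchedY : Multiset (ℝ × ℝ)
  fst_eq : pairs.map Prod.fst + unmatchedX = X
  snd_eq : pairs.map Prod.snd + unmatchedY = Y

/-- The ℓ^p displacement of a matched pair. -/
def pairDisp (p : ℝ≥0∞) (c : (ℝ × ℝ) × (ℝ × ℝ)) : ℝ :=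
  lpNorm2 p (c.1.1 - c.2.1, c.1.2 - c.2.2)

/-- The `p`-cost of a matching: for `p < ∞` it is
`(∑_{matched pairs} ‖x − y‖_p^p + ∑_{unmatched z} dist_p(z,Δ)^p)^{1/p}`; for `p = ∞` it is
the maximum displacement (over matched pairs and unmatched points). -/
def Matching.cost (p : ℝ≥0∞) {X Y : Multiset (ℝ × ℝ)} (M : Matching X Y) : ℝ :=
  if p = ∞ then
    sSup (insert (0 : ℝ)
      {r : ℝ | r ∈ M.pairs.map (pairDisp ∞) + (M.unmatchedX + M.unmatchedY).map (diagDist ∞)})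
  else
    ((M.pairs.map fun c => pairDisp p c ^ p.toReal).sum +
      ((M.unmatchedX + M.unmatchedY).map fun z => diagDist p z ^ p.toReal).sum) ^ (1 / p.toReal)

/-- The `p`-Wasserstein distance between two persistence diagrams (bottleneck distance for
`p = ∞`): the infimum of the `p`-cost over all matchings. -/
def wassersteinDist (p : ℝ≥0∞) (X Y : Multiset (ℝ × ℝ)) : ℝ :=
  sInf {c : ℝ | ∃ M : Matching X Y, c = M.cost p}

end


noncomputable section

open Multiset Filter

lemma lpNorm2_nonneg (p : ℝ≥0∞) (z : ℝ × ℝ) : 0 ≤ lpNorm2 p z := by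
  unfold lpNorm2
  split
  · exact le_max_of_le_left (abs_nonneg _)
  · exact Real.rpow_nonneg (by positivity) _

lemma lpNorm2_one (z : ℝ × ℝ) : lpNorm2 1 z = |z.1| + |z.2| := by
  simp [lpNorm2, Real.rpow_one]

lemma diagDist_nonneg (p : ℝ≥0∞) (z : ℝ × ℝ) : 0 ≤ diagDist p z :=
  Real.iInf_nonneg fun _ => lpNorm2_nonneg _ _

lemma diagDist_le (p : ℝ≥0∞) (z : ℝ × ℝ) (t : ℝ) :
    diagDist p z ≤ lpNorm2 p (z.1 - t, z.2 - t) :=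
  ciInf_le ⟨0, by rintro x ⟨t, rfl⟩; exact lpNorm2_nonneg _ _⟩ t

lemma pairDisp_nonneg (p : ℝ≥0∞) (c : (ℝ × ℝ) × (ℝ × ℝ)) : 0 ≤ pairDisp p c :=
  lpNorm2_nonneg _ _

lemma pairDisp_one (c : (ℝ × ℝ) × (ℝ × ℝ)) :
    pairDisp 1 c = |c.1.1 - c.2.1| + |c.1.2 - c.2.2| := by
  rw [pairDisp, lpNorm2_one]

lemma cost_nonneg (p : ℝ≥0∞) {X Y : Multiset (ℝ × ℝ)} (M : Matching X Y) : 0 ≤ M.cost p := by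
  unfold Matching.cost
  split
  · exact le_csSup ((Multiset.finite_toSet _).insert 0).bddAbove (Set.mem_insert _ _)
  · refine Real.rpow_nonneg (add_nonneg (Multiset.sum_nonneg ?_) (Multiset.sum_nonneg ?_)) _
    · rintro x hx
      obtain ⟨c, -, rfl⟩ := Multiset.mem_map.mp hx
      exact Real.rpow_nonneg (pairDisp_nonneg _ _) _
    · rintro x hx
      obtain ⟨z, -, rfl⟩ := Multiset.mem_map.mp hx
      exact Real.rpow_nonneg (diagDist_nonneg _ _) _

lemma wd_le_cost (p : ℝ≥0∞) {X Y : Multiset (ℝ × ℝ)} (M : Matching X Y) :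
    wassersteinDist p X Y ≤ M.cost p :=
  csInf_le ⟨0, by rintro c ⟨M', rfl⟩; exact cost_nonneg p M'⟩ ⟨M, rfl⟩

lemma cost_one {X Y : Multiset (ℝ × ℝ)} (M : Matching X Y) :
    M.cost 1 = (M.pairs.map (pairDisp 1)).sum
      + ((M.unmatchedX + M.unmatchedY).map (diagDist 1)).sum := by
  simp [Matching.cost, Real.rpow_one]

end

/-- Let `B` be a real Banach space and `f` a function on the closed
half-plane `{(x,y) : x ≤ y}` with values in `B` (modelled as `f : ℝ × ℝ → B`), vanishing on
the diagonal and not identically zero on the half-plane.  Let `Φ(X) = ∑_{x ∈ X} f(x)` be the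
associated linear representation of persistence diagrams.  Then for `p ∈ [1,∞]` and `C > 0`,
`Φ` is Lipschitz with constant `C` with respect to `W_p` if and only if `p = 1` and `f` is
Lipschitz with constant `C` with respect to the ℓ¹ metric on ℝ². -/
theorem linear_representation_lipschitz_iff
    {B : Type*} [NormedAddCommGroup B] [NormedSpace ℝ B] [CompleteSpace B]
    (f : ℝ × ℝ → B)
    (hdiag : ∀ t : ℝ, f (t, t) = 0)
    (hne : ∃ z : ℝ × ℝ, z.1 ≤ z.2 ∧ f z ≠ 0)
    (p : ℝ≥0∞) (hp : 1 ≤ p) (C : ℝ) (hC : 0 < C) :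
    (∀ X Y : Multiset (ℝ × ℝ), IsDiagram X → IsDiagram Y →
        ‖(X.map f).sum - (Y.map f).sum‖ ≤ C * wassersteinDist p X Y) ↔
      (p = 1 ∧ ∀ z w : ℝ × ℝ, z.1 ≤ z.2 → w.1 ≤ w.2 →
        ‖f z - f w‖ ≤ C * (|z.1 - w.1| + |z.2 - w.2|)) := by
  constructor
  · -- forward direction
    intro hPhi
    obtain ⟨z, hz12, hzf⟩ := hne
    have hzlt : z.1 < z.2 := by
      rcases lt_or_eq_of_le hz12 with h | h
      · exact h
      · exfalso; apply hzf
        have hz : z = (z.1, z.1) := Prod.ext rfl h.symm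
        rw [hz]; exact hdiag z.1
    have hfz : 0 < ‖f z‖ := norm_pos_iff.mpr hzf
    have hY0 : IsDiagram (0 : Multiset (ℝ × ℝ)) := fun w hw => absurd hw (Multiset.notMem_zero w)
    have hXn : ∀ n : ℕ, IsDiagram (Multiset.replicate n z) := fun n w hw =>
      (Multiset.eq_of_mem_replicate hw) ▸ hzlt
    have hbound : ∀ n : ℕ, (n : ℝ) * ‖f z‖ ≤
        C * (⟨0, Multiset.replicate n z, 0, by simp, by simp⟩ :
          Matching (Multiset.replicate n z) 0).cost p := by
      intro n
      have h := hPhi (Multiset.replicate n z) 0 (hXn n) hY0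
      have hnorm : ‖((Multiset.replicate n z).map f).sum - ((0 : Multiset (ℝ × ℝ)).map f).sum‖
          = (n : ℝ) * ‖f z‖ := by
        simp [Multiset.map_replicate, Multiset.sum_replicate, ← Nat.cast_smul_eq_nsmul ℝ,
          norm_smul]
      rw [hnorm] at h
      refine h.trans (mul_le_mul_of_nonneg_left (wd_le_cost p _) hC.le)
    have hp1 : p = 1 := by
      by_contra hpne
      have hplt : 1 < p := lt_of_le_of_ne hp (Ne.symm hpne)
      by_cases hptop : p = ∞
      · subst hptop
        set d : ℝ := diagDist ∞ z with hd
        have hcost : ∀ n : ℕ, n ≠ 0 →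
            (⟨0, Multiset.replicate n z, 0, by simp, by simp⟩ :
              Matching (Multiset.replicate n z) 0).cost ∞ = max 0 d := by
          intro n hn
          rw [Matching.cost]
          simp only [if_pos rfl]
          have hset : {r : ℝ | r ∈ (0 : Multiset ((ℝ × ℝ) × (ℝ × ℝ))).map (pairDisp ∞)
              + ((Multiset.replicate n z + 0).map (diagDist ∞))} = {d} := by
            ext r
            simp [Multiset.mem_replicate, hn, hd]
          rw [hset]
          rw [show (insert (0:ℝ) {d} : Set ℝ) = {0, d} from rfl, csSup_pair]
          rfl
        obtain ⟨n, hn⟩ := exists_nat_gt (C * max 0 d / ‖f z‖)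
        have h1 := hbound (n + 1)
        rw [hcost (n + 1) (Nat.succ_ne_zero n)] at h1
        have h2 : C * max 0 d / ‖f z‖ < (n + 1 : ℕ) := hn.trans (by exact_mod_cast Nat.lt_succ_self n)
        rw [div_lt_iff₀ hfz] at h2
        linarith
      · -- finite p, 1 < p
        set r : ℝ := p.toReal with hrdef
        have hr1 : 1 < r := by
          have := (ENNReal.toReal_lt_toReal ENNReal.one_ne_top hptop).mpr hplt
          simpa using this
        have hr0 : 0 < r := by linarith
        set d : ℝ := diagDist p z with hd
        have hdnn : 0 ≤ d := diagDist_nonneg p z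
        have hcost : ∀ n : ℕ,
            (⟨0, Multiset.replicate n z, 0, by simp, by simp⟩ :
              Matching (Multiset.replicate n z) 0).cost p = (n : ℝ) ^ (1 / r) * d := by
          intro n
          rw [Matching.cost, if_neg hptop]
          simp only [Multiset.map_zero, Multiset.sum_zero, add_zero, zero_add,
            Multiset.map_replicate, Multiset.sum_replicate, nsmul_eq_mul]
          rw [Real.mul_rpow (Nat.cast_nonneg n) (Real.rpow_nonneg hdnn r),
            ← Real.rpow_mul hdnn, mul_one_div_cancel (ne_of_gt hr0), Real.rpow_one]
        have hs0 : 0 < 1 - 1 / r := by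
          have : 1 / r < 1 := by rw [div_lt_one hr0]; exact hr1
          linarith
        have htend : Filter.Tendsto (fun n : ℕ => (n : ℝ) ^ (1 - 1 / r)) Filter.atTop
            Filter.atTop := (tendsto_rpow_atTop hs0).comp tendsto_natCast_atTop_atTop
        obtain ⟨n, hn1, hn2⟩ := ((htend.eventually_gt_atTop (C * d / ‖f z‖)).and
          (Filter.eventually_ge_atTop 1)).exists
        have hnpos : (0 : ℝ) < n := by exact_mod_cast hn2
        have h1 := hbound n
        rw [hcost n] at h1
        have hsplit : (n : ℝ) = (n : ℝ) ^ (1 - 1 / r) * (n : ℝ) ^ (1 / r) := by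
          rw [← Real.rpow_add hnpos]
          norm_num
        have hnr : (0 : ℝ) < (n : ℝ) ^ (1 / r) := Real.rpow_pos_of_pos hnpos _
        have h2 : (n : ℝ) ^ (1 - 1 / r) * ‖f z‖ ≤ C * d := by
          refine le_of_mul_le_mul_right ?_ hnr
          calc (n : ℝ) ^ (1 - 1 / r) * ‖f z‖ * (n : ℝ) ^ (1 / r)
              = ((n : ℝ) ^ (1 - 1 / r) * (n : ℝ) ^ (1 / r)) * ‖f z‖ := by ring
            _ = (n : ℝ) * ‖f z‖ := by rw [← hsplit]
            _ ≤ C * ((n : ℝ) ^ (1 / r) * d) := h1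
            _ = C * d * (n : ℝ) ^ (1 / r) := by ring
        rw [div_lt_iff₀ hfz] at hn1
        linarith
    refine ⟨hp1, ?_⟩
    subst hp1
    -- the Lipschitz property of f
    have hnd : ∀ w : ℝ × ℝ, w.1 < w.2 → ‖f w‖ ≤ C * diagDist 1 w := by
      intro w hw
      have h := hPhi {w} 0 (by intro u hu; rw [Multiset.mem_singleton] at hu; exact hu ▸ hw)
        (fun u hu => absurd hu (Multiset.notMem_zero u))
      have hW : wassersteinDist 1 {w} 0 ≤ diagDist 1 w := by
        have h := wd_le_cost 1 (⟨0, {w}, 0, by simp, by simp⟩ : Matching {w} 0)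
        rw [cost_one] at h
        simpa using h
      simp only [Multiset.map_singleton, Multiset.sum_singleton, Multiset.map_zero,
        Multiset.sum_zero, sub_zero] at h
      calc ‖f w‖ ≤ C * wassersteinDist 1 {w} 0 := h
        _ ≤ C * diagDist 1 w := mul_le_mul_of_nonneg_left hW hC.le
    intro u w hu hw
    rcases lt_or_eq_of_le hu with hu' | hu'
    · rcases lt_or_eq_of_le hw with hw' | hw'
      · -- both off-diagonal: match them directly
        have h := hPhi {u} {w}
          (by intro a ha; rw [Multiset.mem_singleton] at ha; exact ha ▸ hu')
          (by intro a ha; rw [Multiset.mem_singleton] at ha; exact ha ▸ hw')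
        simp only [Multiset.map_singleton, Multiset.sum_singleton] at h
        have hW : wassersteinDist 1 {u} {w} ≤ |u.1 - w.1| + |u.2 - w.2| := by
          have := wd_le_cost 1 (⟨{(u, w)}, 0, 0, by simp, by simp⟩ : Matching {u} {w})
          rw [cost_one] at this
          simpa [pairDisp_one] using this
        exact h.trans (mul_le_mul_of_nonneg_left hW hC.le)
      · -- w on the diagonal
        have hwz : f w = 0 := by
          have : w = (w.1, w.1) := Prod.ext rfl hw'.symm
          rw [this]; exact hdiag w.1
        rw [hwz, sub_zero]
        refine (hnd u hu').trans ?_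
        refine mul_le_mul_of_nonneg_left ?_ hC.le
        refine (diagDist_le 1 u w.1).trans ?_
        rw [lpNorm2_one, ← hw']
    · -- u on the diagonal
      have huz : f u = 0 := by
        have : u = (u.1, u.1) := Prod.ext rfl hu'.symm
        rw [this]; exact hdiag u.1
      rcases lt_or_eq_of_le hw with hw' | hw'
      · rw [huz, zero_sub, norm_neg]
        refine (hnd w hw').trans ?_
        refine mul_le_mul_of_nonneg_left ?_ hC.le
        refine (diagDist_le 1 w u.1).trans ?_
        rw [lpNorm2_one]
        rw [abs_sub_comm w.1 u.1, abs_sub_comm w.2 u.1, ← hu']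
      · have hwz : f w = 0 := by
          have : w = (w.1, w.1) := Prod.ext rfl hw'.symm
          rw [this]; exact hdiag w.1
        rw [huz, hwz, sub_zero, norm_zero]
        positivity
  · -- backward direction
    rintro ⟨rfl, hf⟩ X Y hX hY
    have key : ∀ w : ℝ × ℝ, w.1 ≤ w.2 → ‖f w‖ ≤ C * diagDist 1 w := by
      intro w hw
      rw [mul_comm, ← div_le_iff₀ hC]
      refine le_ciInf fun t => ?_
      rw [div_le_iff₀ hC, lpNorm2_one]
      have h := hf w (t, t) hw le_rfl
      simp only [hdiag, sub_zero] at h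
      calc ‖f w‖ ≤ C * (|w.1 - t| + |w.2 - t|) := h
        _ = (|w.1 - t| + |w.2 - t|) * C := mul_comm _ _
    have hb : ∀ c ∈ {c : ℝ | ∃ M : Matching X Y, c = M.cost 1},
        ‖(X.map f).sum - (Y.map f).sum‖ / C ≤ c := by
      rintro c ⟨M, rfl⟩
      rw [div_le_iff₀ hC]
      have hXm : X.map f = M.pairs.map (fun c => f c.1) + M.unmatchedX.map f := by
        conv_lhs => rw [← M.fst_eq]
        rw [Multiset.map_add, Multiset.map_map]; rfl
      have hYm : Y.map f = M.pairs.map (fun c => f c.2) + M.unmatchedY.map f := by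
        conv_lhs => rw [← M.snd_eq]
        rw [Multiset.map_add, Multiset.map_map]; rfl
      have hsum : (X.map f).sum - (Y.map f).sum =
          (M.pairs.map (fun c => f c.1 - f c.2)).sum
            + ((M.unmatchedX.map f).sum - (M.unmatchedY.map f).sum) := by
        rw [hXm, hYm, Multiset.sum_add, Multiset.sum_add, Multiset.sum_map_sub]
        abel
      have hmemX : ∀ c ∈ M.pairs, c.1 ∈ X := by
        intro c hc
        rw [← M.fst_eq]
        exact Multiset.mem_add.mpr (Or.inl (Multiset.mem_map_of_mem _ hc))
      have hmemY : ∀ c ∈ M.pairs, c.2 ∈ Y := by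
        intro c hc
        rw [← M.snd_eq]
        exact Multiset.mem_add.mpr (Or.inl (Multiset.mem_map_of_mem _ hc))
      have b1 : ‖(M.pairs.map (fun c => f c.1 - f c.2)).sum‖
          ≤ C * (M.pairs.map (pairDisp 1)).sum := by
        refine (norm_multiset_sum_le _).trans ?_
        rw [Multiset.map_map, ← Multiset.sum_map_mul_left]
        refine Multiset.sum_map_le_sum_map _ _ fun c hc => ?_
        have h := hf c.1 c.2 (hX c.1 (hmemX c hc)).le (hY c.2 (hmemY c hc)).le
        rw [pairDisp_one]
        exact h
      have b2 : ‖(M.unmatchedX.map f).sum‖ ≤ C * (M.unmatchedX.map (diagDist 1)).sum := by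
        refine (norm_multiset_sum_le _).trans ?_
        rw [Multiset.map_map, ← Multiset.sum_map_mul_left]
        refine Multiset.sum_map_le_sum_map _ _ fun w hw => ?_
        refine key w (hX w ?_).le
        rw [← M.fst_eq]
        exact Multiset.mem_add.mpr (Or.inr hw)
      have b3 : ‖(M.unmatchedY.map f).sum‖ ≤ C * (M.unmatchedY.map (diagDist 1)).sum := by
        refine (norm_multiset_sum_le _).trans ?_
        rw [Multiset.map_map, ← Multiset.sum_map_mul_left]
        refine Multiset.sum_map_le_sum_map _ _ fun w hw => ?_
        refine key w (hY w ?_).le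
        rw [← M.snd_eq]
        exact Multiset.mem_add.mpr (Or.inr hw)
      have hc1 : M.cost 1 = (M.pairs.map (pairDisp 1)).sum
          + ((M.unmatchedX.map (diagDist 1)).sum + (M.unmatchedY.map (diagDist 1)).sum) := by
        rw [cost_one, Multiset.map_add, Multiset.sum_add]
      rw [hc1, hsum, mul_comm]
      calc ‖(M.pairs.map (fun c => f c.1 - f c.2)).sum
            + ((M.unmatchedX.map f).sum - (M.unmatchedY.map f).sum)‖
          ≤ ‖(M.pairs.map (fun c => f c.1 - f c.2)).sum‖
            + (‖(M.unmatchedX.map f).sum‖ + ‖(M.unmatchedY.map f).sum‖) :=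
            (norm_add_le _ _).trans (by gcongr; exact norm_sub_le _ _)
        _ ≤ C * (M.pairs.map (pairDisp 1)).sum
            + (C * (M.unmatchedX.map (diagDist 1)).sum
              + C * (M.unmatchedY.map (diagDist 1)).sum) := by
            exact add_le_add b1 (add_le_add b2 b3)
        _ = C * ((M.pairs.map (pairDisp 1)).sum
            + ((M.unmatchedX.map (diagDist 1)).sum + (M.unmatchedY.map (diagDist 1)).sum)) := by
            ring
    have hne' : {c : ℝ | ∃ M : Matching X Y, c = M.cost 1}.Nonempty :=
      ⟨_, (⟨0, X, Y, by simp, by simp⟩ : Matching X Y), rfl⟩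
    have h := le_csInf hne' hb
    rw [div_le_iff₀ hC] at h
    rw [mul_comm]
    exact h
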